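/- Every square submatrix of the d-th boundary matrix ∂_d of a simplicial complex has determinant of absolute value at most (√(d+1))^n where n = min{n_{d-1}, n_d}; consequently the maximal rank T_max(K) of any (d-1)-dimensional relative torsion group of K is O((√(d+1))^n). -/

import Mathlib

open Matrix

/-- An abstract simplicial complex on vertex set `V`: a finite, downward-closed
family of nonempty finite subsets of `V`. -/
structure SComplex (V : Type) where
  faces : Finset (Finset V)
  down_closed : ∀ s ∈ faces, ∀ t ⊆ s, t.Nonempty → t ∈ faces

/-- The index type of `d`-dimensional simplices (i.e. `(d+1)`-element subsets) on `V`. -/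
abbrev SimpIdx (V : Type) (d : ℕ) := {s : Finset V // s.card = d + 1}

variable {V : Type} [Fintype V] [LinearOrder V]

/-- The signed incidence coefficient of the boundary operator: for `τ ⊆ σ` of
codimension one it is `(-1)ⁱ` where `i` is the position of the removed vertex. -/
def bsign (τ σ : Finset V) : ℤ :=
  if τ ⊆ σ ∧ τ.card + 1 = σ.card then
    (-1 : ℤ) ^ (σ.filter (fun w => ∃ v ∈ σ \ τ, w < v)).card
  else 0

/-- The global integral boundary matrix `∂_{d+1}` from `(d+1)`-dimensional to
`d`-dimensional simplices on the vertex set `V`. -/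
def gbdryZ (V : Type) [Fintype V] [LinearOrder V] (d : ℕ) :
    Matrix (SimpIdx V d) (SimpIdx V (d + 1)) ℤ :=
  fun τ σ => bsign (τ : Finset V) (σ : Finset V)

/-- The global real boundary matrix. -/
noncomputable def gbdry (V : Type) [Fintype V] [LinearOrder V] (d : ℕ) :
    Matrix (SimpIdx V d) (SimpIdx V (d + 1)) ℝ :=
  (gbdryZ V d).map (fun z => (z : ℝ))

/-- Diagonal 0/1 matrix indicating membership of simplices in the complex `K`. -/
noncomputable def SComplex.ind (K : SComplex V) (d : ℕ) :
    Matrix (SimpIdx V d) (SimpIdx V d) ℝ :=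
  Matrix.diagonal fun σ => if (σ : Finset V) ∈ K.faces then (1 : ℝ) else 0

/-- The boundary matrix `∂_{d+1}[K]` of the complex `K` (rows and columns outside
`K` are zero). -/
noncomputable def SComplex.bdry (K : SComplex V) (d : ℕ) :
    Matrix (SimpIdx V d) (SimpIdx V (d + 1)) ℝ :=
  K.ind d * gbdry V d * K.ind (d + 1)

/-- A chain is supported on the complex `K`. -/
def SComplex.supportedOn (K : SComplex V) {d : ℕ} (f : SimpIdx V d → ℝ) : Prop :=
  ∀ σ : SimpIdx V d, f σ ≠ 0 → (σ : Finset V) ∈ K.faces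

/-- A `d`-dimensional chain is a cycle (its boundary vanishes; every `0`-chain is a cycle). -/
def IsCycle (V : Type) [Fintype V] [LinearOrder V] : (d : ℕ) → (SimpIdx V d → ℝ) → Prop
  | 0, _ => True
  | (d + 1), γ => gbdry V d *ᵥ γ = 0

/-- A `d`-dimensional cycle `γ` is null-homologous in `K` iff it is the boundary of a
`(d+1)`-chain of `K` (a unit `γ`-flow). -/
def SComplex.NullHomologous (K : SComplex V) (d : ℕ) (γ : SimpIdx V d → ℝ) : Prop :=
  ∃ f : SimpIdx V (d + 1) → ℝ, K.supportedOn f ∧ gbdry V d *ᵥ f = γ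

/-- The weighted effective resistance of `γ` in `K`: the infimum of flow energies
`∑ f(σ)²/w(σ)` over unit `γ`-flows `f` in `K`. -/
noncomputable def SComplex.effResW (K : SComplex V) (d : ℕ)
    (w : SimpIdx V (d + 1) → ℝ) (γ : SimpIdx V d → ℝ) : ℝ :=
  sInf {E : ℝ | ∃ f : SimpIdx V (d + 1) → ℝ, K.supportedOn f ∧ gbdry V d *ᵥ f = γ ∧
    E = ∑ σ : SimpIdx V (d + 1), f σ ^ 2 / w σ}

/-- Unweighted effective resistance. -/
noncomputable def SComplex.effRes (K : SComplex V) (d : ℕ) (γ : SimpIdx V d → ℝ) : ℝ :=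
  K.effResW d (fun _ => 1) γ

/-- The weighted up-Laplacian `L^{up,W} = ∂ W ∂ᵀ` of `K` acting on `d`-chains. -/
noncomputable def SComplex.upLapW (K : SComplex V) (d : ℕ) (w : SimpIdx V (d + 1) → ℝ) :
    Matrix (SimpIdx V d) (SimpIdx V d) ℝ :=
  K.bdry d * Matrix.diagonal w * (K.bdry d)ᵀ

/-- The (unweighted) up-Laplacian `L^{up} = ∂ ∂ᵀ` of `K` acting on `d`-chains. -/
noncomputable def SComplex.upLap (K : SComplex V) (d : ℕ) :
    Matrix (SimpIdx V d) (SimpIdx V d) ℝ :=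
  K.bdry d * (K.bdry d)ᵀ

/-- The down-Laplacian `L^{down} = ∂ᵀ ∂` of `K` acting on `d`-chains (zero on `0`-chains). -/
noncomputable def SComplex.downLap (K : SComplex V) :
    (d : ℕ) → Matrix (SimpIdx V d) (SimpIdx V d) ℝ
  | 0 => 0
  | (d + 1) => (K.bdry d)ᵀ * K.bdry d

/-- The combinatorial Laplacian `L = L^{up} + L^{down}`. -/
noncomputable def SComplex.combLap (K : SComplex V) (d : ℕ) :
    Matrix (SimpIdx V d) (SimpIdx V d) ℝ :=
  K.upLap d + K.downLap d

/-- `X` is the Moore–Penrose pseudoinverse of `A` (the four Penrose conditions). -/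
def IsMoorePenrose {m n : Type} [Fintype m] [Fintype n]
    (A : Matrix m n ℝ) (X : Matrix n m ℝ) : Prop :=
  A * X * A = A ∧ X * A * X = X ∧ (A * X)ᵀ = A * X ∧ (X * A)ᵀ = X * A

/-- `μ` is an eigenvalue of the real matrix `M`. -/
def IsEigen {n : Type} [Fintype n] (M : Matrix n n ℝ) (μ : ℝ) : Prop :=
  ∃ x : n → ℝ, x ≠ 0 ∧ M *ᵥ x = μ • x

/-- The spectral gap of `M`: the infimum of its nonzero (real) eigenvalues. -/
noncomputable def specGap {n : Type} [Fintype n] (M : Matrix n n ℝ) : ℝ :=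
  sInf {μ : ℝ | μ ≠ 0 ∧ IsEigen M μ}

/-- The number of `d`-dimensional simplices of `K`. -/
def nface (K : SComplex V) (d : ℕ) : ℕ :=
  (K.faces.filter fun s => s.card = d + 1).card

/-- The weighted effective capacitance of `γ` for `L ⊆ K`: the infimum of potential
energies `‖δ[K] p‖²_W` over unit `γ`-potentials `p` of `L`. -/
noncomputable def SComplex.effCapW (K L : SComplex V) (d : ℕ)
    (w : SimpIdx V (d + 1) → ℝ) (γ : SimpIdx V d → ℝ) : ℝ :=
  sInf {E : ℝ | ∃ p : SimpIdx V d → ℝ, L.supportedOn p ∧ (L.bdry d)ᵀ *ᵥ p = 0 ∧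
    p ⬝ᵥ γ = 1 ∧ E = ∑ σ : SimpIdx V (d + 1), ((K.bdry d)ᵀ *ᵥ p) σ ^ 2 * w σ}

/-- Unweighted effective capacitance. -/
noncomputable def SComplex.effCap (K L : SComplex V) (d : ℕ) (γ : SimpIdx V d → ℝ) : ℝ :=
  K.effCapW L d (fun _ => 1) γ

/-- The relative integral boundary matrix `∂[L, L₀]`: entries are kept only for
simplices of `L` not in `L₀`. -/
def relBdryZ (L L₀ : SComplex V) (d : ℕ) :
    Matrix (SimpIdx V d) (SimpIdx V (d + 1)) ℤ :=
  fun τ σ => if (τ : Finset V) ∈ L.faces ∧ (τ : Finset V) ∉ L₀.faces ∧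
      (σ : Finset V) ∈ L.faces ∧ (σ : Finset V) ∉ L₀.faces then
    bsign (τ : Finset V) (σ : Finset V) else 0

/-- Kernel of the relative boundary map out of relative `d`-chains. -/
noncomputable def relKer (L L₀ : SComplex V) : (d : ℕ) → Submodule ℤ (SimpIdx V d → ℤ)
  | 0 => ⊤
  | (d + 1) => LinearMap.ker (Matrix.toLin' (relBdryZ L L₀ d))

/-- The cardinality of the torsion subgroup of the relative homology group
`H_d(L, L₀; ℤ)`. -/
noncomputable def relTorsionCard (L L₀ : SComplex V) (d : ℕ) : ℕ :=
  Nat.card (Submodule.torsion ℤ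
    (↥(relKer L L₀ d) ⧸ Submodule.comap (relKer L L₀ d).subtype
      (LinearMap.range (Matrix.toLin' (relBdryZ L L₀ d)))))

open scoped RealInnerProductSpace in
theorem hadamard_ineq {k : ℕ} (A : Matrix (Fin k) (Fin k) ℝ) :
    |A.det| ≤ ∏ j, Real.sqrt (∑ i, A i j ^ 2) := by
  classical
  have hdim : Module.finrank ℝ (EuclideanSpace ℝ (Fin k)) = Fintype.card (Fin k) := by simp
  set f : Fin k → EuclideanSpace ℝ (Fin k) := fun j => (WithLp.equiv 2 _).symm (fun i => A i j)
    with hf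
  set b := EuclideanSpace.basisFun (Fin k) ℝ with hb
  haveI : WellFoundedLT (Fin k) := Finite.to_wellFoundedLT
  set g : OrthonormalBasis (Fin k) ℝ (EuclideanSpace ℝ (Fin k)) :=
    InnerProductSpace.gramSchmidtOrthonormalBasis hdim f with hg
  have hAf : b.toBasis.toMatrix f = A := by
    ext i j
    simp [Module.Basis.toMatrix_apply, hb, hf, EuclideanSpace.basisFun_repr]
  have hsplit : A.det = (b.toBasis.toMatrix ⇑g.toBasis).det * (g.toBasis.toMatrix f).det := by
    rw [← Matrix.det_mul, Module.Basis.toMatrix_mul_toMatrix, hAf]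
  have habs1 : |(b.toBasis.toMatrix ⇑g.toBasis).det| = 1 := by
    rcases b.det_to_matrix_orthonormalBasis_real g with h | h <;>
      rw [← Module.Basis.det_apply] <;> simp [h]
  have hgd : (g.toBasis.toMatrix f).det = ∏ i, ⟪g i, f i⟫ := by
    rw [← Module.Basis.det_apply]
    exact InnerProductSpace.gramSchmidtOrthonormalBasis_det hdim f
  have hnorm : ∀ j, ‖f j‖ = Real.sqrt (∑ i, A i j ^ 2) := by
    intro j
    rw [EuclideanSpace.norm_eq]
    congr 1
    apply Finset.sum_congr rfl
    intro i _
    rw [Real.norm_eq_abs, sq_abs]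
    rfl
  calc |A.det| = |(b.toBasis.toMatrix ⇑g.toBasis).det| * |(g.toBasis.toMatrix f).det| := by
        rw [hsplit, abs_mul]
    _ = |∏ i, ⟪g i, f i⟫| := by rw [habs1, one_mul, hgd]
    _ ≤ ∏ i, |⟪g i, f i⟫| := by rw [Finset.abs_prod]
    _ ≤ ∏ j, Real.sqrt (∑ i, A i j ^ 2) := by
        apply Finset.prod_le_prod (fun i _ => abs_nonneg _)
        intro i _
        calc |⟪g i, f i⟫| ≤ ‖g i‖ * ‖f i‖ := abs_real_inner_le_norm _ _
          _ = ‖f i‖ := by rw [g.orthonormal.1 i, one_mul]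
          _ = _ := hnorm i

lemma abs_bsign_le {V : Type} [Fintype V] [LinearOrder V] (τ σ : Finset V) :
    |bsign τ σ| ≤ 1 := by
  unfold bsign
  split
  · rw [abs_pow, abs_neg, abs_one, one_pow]
  · simp

lemma bsign_eq_zero {V : Type} [Fintype V] [LinearOrder V] {τ σ : Finset V}
    (h : ¬ (τ ⊆ σ ∧ τ.card + 1 = σ.card)) : bsign τ σ = 0 := by
  unfold bsign
  rw [if_neg h]

lemma card_le_nface {V : Type} [Fintype V] [LinearOrder V] (K : SComplex V) {d k : ℕ}
    (r : Fin k → SimpIdx V d) (hr : Function.Injective r)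
    (hrK : ∀ i, ((r i : Finset V)) ∈ K.faces) : k ≤ nface K d := by
  classical
  have : (Finset.univ : Finset (Fin k)).card ≤ (K.faces.filter fun s => s.card = d + 1).card := by
    apply Finset.card_le_card_of_injOn (fun i : Fin k => (r i : Finset V))
    · intro i _
      simp only [Finset.mem_coe, Finset.mem_filter]
      exact ⟨hrK i, (r i).2⟩
    · intro i _ j _ hij
      exact hr (Subtype.ext hij)
  simpa [nface] using this

lemma col_sq_sum_le {V : Type} [Fintype V] [LinearOrder V] {d k : ℕ}
    (r : Fin k → SimpIdx V d) (hr : Function.Injective r) (σ : SimpIdx V (d + 1)) :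
    ∑ i, ((gbdryZ V d (r i) σ : ℤ) : ℝ) ^ 2 ≤ (d : ℝ) + 2 := by
  classical
  have hle : ∀ i : Fin k, ((gbdryZ V d (r i) σ : ℤ) : ℝ) ^ 2 ≤
      if ((r i : Finset V)) ⊆ (σ : Finset V) then (1 : ℝ) else 0 := by
    intro i
    by_cases hsub : ((r i : Finset V)) ⊆ (σ : Finset V)
    · rw [if_pos hsub]
      have h1 : |bsign ((r i : Finset V)) ((σ : Finset V))| ≤ 1 := abs_bsign_le _ _
      have : |((gbdryZ V d (r i) σ : ℤ) : ℝ)| ≤ 1 := by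
        rw [gbdryZ]
        rw [← Int.cast_abs]
        exact_mod_cast h1
      calc ((gbdryZ V d (r i) σ : ℤ) : ℝ) ^ 2 = |((gbdryZ V d (r i) σ : ℤ) : ℝ)| ^ 2 := by
            rw [sq_abs]
        _ ≤ 1 ^ 2 := by
            apply pow_le_pow_left₀ (abs_nonneg _) this
        _ = 1 := one_pow 2
    · rw [if_neg hsub]
      have : gbdryZ V d (r i) σ = 0 := by
        rw [gbdryZ]
        exact bsign_eq_zero (fun hh => hsub hh.1)
      rw [this]
      simp
  calc ∑ i, ((gbdryZ V d (r i) σ : ℤ) : ℝ) ^ 2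
      ≤ ∑ i, (if ((r i : Finset V)) ⊆ (σ : Finset V) then (1 : ℝ) else 0) :=
        Finset.sum_le_sum fun i _ => hle i
    _ = ((Finset.univ.filter fun i : Fin k => ((r i : Finset V)) ⊆ (σ : Finset V)).card : ℝ) := by
        rw [Finset.sum_boole]
    _ ≤ ((d : ℝ) + 2) := by
        have hcard : (Finset.univ.filter fun i : Fin k =>
            ((r i : Finset V)) ⊆ (σ : Finset V)).card ≤ d + 2 := by
          have h1 : (Finset.univ.filter fun i : Fin k => ((r i : Finset V)) ⊆ (σ : Finset V)).card
              ≤ ((σ : Finset V).powersetCard (d + 1)).card := by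
            apply Finset.card_le_card_of_injOn (fun i : Fin k => (r i : Finset V))
            · intro i hi
              rw [Finset.mem_coe, Finset.mem_filter] at hi
              rw [Finset.mem_coe, Finset.mem_powersetCard]
              exact ⟨hi.2, (r i).2⟩
            · intro i _ j _ hij
              exact hr (Subtype.ext hij)
          have h2 : ((σ : Finset V).powersetCard (d + 1)).card = d + 2 := by
            rw [Finset.card_powersetCard, σ.2]
            simp [Nat.choose_succ_self_right]
          omega
        exact_mod_cast hcard

lemma hadamard_part1 {V : Type} [Fintype V] [LinearOrder V] (K : SComplex V) (d : ℕ)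
    (k : ℕ) (r : Fin k → SimpIdx V d) (c : Fin k → SimpIdx V (d + 1))
    (hr : Function.Injective r) (hc : Function.Injective c)
    (hrK : ∀ i, ((r i : Finset V)) ∈ K.faces) (hcK : ∀ i, ((c i : Finset V)) ∈ K.faces) :
    ((((gbdryZ V d).submatrix r c).det).natAbs : ℝ) ≤
      Real.sqrt ((d : ℝ) + 2) ^ (min (nface K d) (nface K (d + 1))) := by
  classical
  set M : Matrix (Fin k) (Fin k) ℝ :=
    ((gbdryZ V d).submatrix r c).map ⇑(Int.castRingHom ℝ) with hM
  have hMij : ∀ i j, M i j = ((gbdryZ V d (r i) (c j) : ℤ) : ℝ) := by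
    intro i j
    simp [hM]
  have hdet : ((((gbdryZ V d).submatrix r c).det).natAbs : ℝ) = |M.det| := by
    rw [hM, ← RingHom.mapMatrix_apply, ← RingHom.map_det, Nat.cast_natAbs]
    simp
  have hcols : ∀ j, Real.sqrt (∑ i, M i j ^ 2) ≤ Real.sqrt ((d : ℝ) + 2) := by
    intro j
    apply Real.sqrt_le_sqrt
    calc ∑ i, M i j ^ 2 = ∑ i, ((gbdryZ V d (r i) (c j) : ℤ) : ℝ) ^ 2 := by
          apply Finset.sum_congr rfl
          intro i _
          rw [hMij]
      _ ≤ (d : ℝ) + 2 := col_sq_sum_le r hr (c j)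
  have hkn : k ≤ min (nface K d) (nface K (d + 1)) := by
    apply le_min
    · exact card_le_nface K r hr hrK
    · exact card_le_nface K c hc hcK
  calc ((((gbdryZ V d).submatrix r c).det).natAbs : ℝ) = |M.det| := hdet
    _ ≤ ∏ j, Real.sqrt (∑ i, M i j ^ 2) := hadamard_ineq M
    _ ≤ ∏ _j : Fin k, Real.sqrt ((d : ℝ) + 2) := by
        apply Finset.prod_le_prod (fun j _ => Real.sqrt_nonneg _) (fun j _ => hcols j)
    _ = Real.sqrt ((d : ℝ) + 2) ^ k := by
        rw [Finset.prod_const, Finset.card_univ, Fintype.card_fin]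
    _ ≤ Real.sqrt ((d : ℝ) + 2) ^ (min (nface K d) (nface K (d + 1))) := by
        apply pow_le_pow_right₀ _ hkn
        rw [show (1 : ℝ) = Real.sqrt 1 by simp]
        apply Real.sqrt_le_sqrt
        linarith [Nat.cast_nonneg (α := ℝ) d]

/-- From a spanning family one can extract a nonsingular square matrix. -/
lemma exists_det_ne_zero_of_span {K : Type} [Field K] {κ : Type} [Fintype κ] [DecidableEq κ]
    {r : ℕ} (w : κ → (Fin r → K)) (hw : Submodule.span K (Set.range w) = ⊤) :
    ∃ t : Fin r → κ, Function.Injective t ∧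
      (Matrix.of fun p q => w (t q) p).det ≠ 0 := by
  classical
  obtain ⟨b, hbsub, hbspan, hbind⟩ := exists_linearIndependent K (Set.range w)
  rw [hw] at hbspan
  haveI : Fintype b := (Set.Finite.subset (Set.finite_range w) hbsub).fintype
  -- b is a basis of Fin r → K
  let bb : Module.Basis b K (Fin r → K) := Module.Basis.mk hbind (by
    rw [Subtype.range_coe_subtype, Set.setOf_mem_eq, hbspan])
  have hcard : Fintype.card b = r := by
    rw [← Module.finrank_eq_card_basis bb]
    simp [Module.finrank_pi]
  -- enumerate b
  let e : Fin r ≃ b := (Fintype.equivFinOfCardEq hcard).symm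
  have hchoice : ∀ q : Fin r, ∃ c : κ, w c = (e q : Fin r → K) := by
    intro q
    obtain ⟨c, hc⟩ := hbsub (e q).2
    exact ⟨c, hc⟩
  choose t ht using hchoice
  have htinj : Function.Injective t := by
    intro p q hpq
    have : (e p : Fin r → K) = (e q : Fin r → K) := by rw [← ht, ← ht, hpq]
    exact e.injective (Subtype.ext this)
  refine ⟨t, htinj, ?_⟩
  have hrows : LinearIndependent K (fun q : Fin r => w (t q)) := by
    have : (fun q : Fin r => w (t q)) = (fun x : b => (x : Fin r → K)) ∘ e := by
      funext q
      simp [ht q]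
    rw [this]
    exact hbind.comp e e.injective
  have hcols : LinearIndependent K (fun q => (Matrix.of fun p q => w (t q) p)ᵀ q) := by
    convert hrows
    rfl
  have := Matrix.linearIndependent_cols_iff_isUnit.mp hcols
  intro hdet
  have hu := (Matrix.isUnit_iff_isUnit_det _).mp this
  rw [hdet] at hu
  exact hu.ne_zero rfl

/-- A matrix with linearly independent columns has an invertible row-selection. -/
lemma exists_rows_det_ne_zero {K : Type} [Field K] {m : Type} [Fintype m] [DecidableEq m] {r : ℕ}
    (M : Matrix m (Fin r) K) (h : LinearIndependent K (fun i => Mᵀ i)) :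
    ∃ s : Fin r → m, Function.Injective s ∧ (M.submatrix s id).det ≠ 0 := by
  classical
  have h3 : M.rank = r := by
    rw [Matrix.rank, Matrix.range_mulVecLin]
    exact (finrank_span_eq_card h).trans (Fintype.card_fin r)
  have hspan : Submodule.span K (Set.range (fun j : m => M j)) = ⊤ := by
    apply Submodule.eq_top_of_finrank_eq
    have h1 : Submodule.span K (Set.range fun j : m => M j) =
        LinearMap.range Mᵀ.mulVecLin := by
      rw [Matrix.range_mulVecLin, Matrix.col, Matrix.transpose_transpose]
    rw [h1]
    have h2 : Mᵀ.rank = M.rank := Matrix.rank_transpose M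
    rw [Matrix.rank] at h2
    rw [h2, h3]
    simp [Module.finrank_pi]
  obtain ⟨t, htinj, hdet⟩ := exists_det_ne_zero_of_span (fun j : m => M j) hspan
  refine ⟨t, htinj, ?_⟩
  intro hcon
  apply hdet
  have : (Matrix.of fun p q => M (t q) p) = (M.submatrix t id)ᵀ := by
    ext p q
    rfl
  rw [this, Matrix.det_transpose, hcon]

lemma torsion_card_le_det {ι κ : Type} [Fintype ι] [Fintype κ] [DecidableEq ι] [DecidableEq κ]
    (B : Matrix ι κ ℤ) (W : Submodule ℤ (ι → ℤ)) :
    ∃ (rr : ℕ) (s : Fin rr → ι) (t : Fin rr → κ), Function.Injective s ∧ Function.Injective t ∧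
      (B.submatrix s t).det ≠ 0 ∧
      Nat.card (Submodule.torsion ℤ (↥W ⧸ Submodule.comap W.subtype
        (LinearMap.range (Matrix.toLin' B)))) ≤ ((B.submatrix s t).det).natAbs := by
  classical
  set N : Submodule ℤ (ι → ℤ) := LinearMap.range (Matrix.toLin' B) with hN
  obtain ⟨r, snf⟩ := N.smithNormalForm (Pi.basisFun ℤ ι)
  obtain ⟨bM, bN, f, a, hsnf⟩ := snf
  have ha : ∀ i, a i ≠ 0 := by
    intro i hai
    have : (bN i : ι → ℤ) = 0 := by rw [hsnf i, hai, zero_smul]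
    exact bN.ne_zero i (by exact_mod_cast Subtype.ext this)
  -- matrices G (columns = basis of N) and M' (columns = bM ∘ f)
  set G : Matrix ι (Fin r) ℤ := Matrix.of (fun j i => (bN i : ι → ℤ) j) with hG
  set M' : Matrix ι (Fin r) ℤ := Matrix.of (fun j i => bM (f i) j) with hM'
  have hGM' : G = M' * Matrix.diagonal a := by
    ext j i
    rw [Matrix.mul_diagonal]
    show (bN i : ι → ℤ) j = bM (f i) j * a i
    rw [hsnf i]
    simp [mul_comm]
  -- choose rows s using linear independence of columns of M' over ℚ
  set Wfull : Matrix ι ι ℤ := (Pi.basisFun ℤ ι).toMatrix ⇑bM with hWfull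
  have hWu : IsUnit Wfull := by
    haveI := (Pi.basisFun ℤ ι).invertibleToMatrix bM
    exact isUnit_of_invertible _
  set ratC : ℤ →+* ℚ := Int.castRingHom ℚ with hratC
  have hWQu : IsUnit (Wfull.map ⇑ratC) := by
    rw [Matrix.isUnit_iff_isUnit_det, ← RingHom.mapMatrix_apply, ← RingHom.map_det]
    have := (Matrix.isUnit_iff_isUnit_det _).mp hWu
    rw [isUnit_iff_ne_zero]
    rw [Int.isUnit_iff] at this
    rcases this with h | h <;> rw [h] <;> norm_num
  have hColsW : LinearIndependent ℚ (fun i => (Wfull.map ⇑ratC)ᵀ i) :=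
    Matrix.linearIndependent_cols_iff_isUnit.mpr hWQu
  have hColsM' : LinearIndependent ℚ (fun i => (M'.map ⇑ratC)ᵀ i) := by
    have heq : (fun i => (M'.map ⇑ratC)ᵀ i) = (fun i => (Wfull.map ⇑ratC)ᵀ i) ∘ ⇑f := by
      funext i
      ext j
      simp [hM', hWfull, Module.Basis.toMatrix_apply]
    rw [heq]
    exact hColsW.comp ⇑f f.injective
  obtain ⟨s, hsinj, hsdet⟩ := exists_rows_det_ne_zero (M'.map ⇑ratC) hColsM'
  -- the matrix Y with B * Y = G
  have hbNmem : ∀ i, (bN i : ι → ℤ) ∈ N := fun i => (bN i).2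
  have hychoice : ∀ i : Fin r, ∃ y : κ → ℤ, B *ᵥ y = (bN i : ι → ℤ) := by
    intro i
    obtain ⟨y, hy⟩ := hbNmem i
    exact ⟨y, by rw [← hy]; rfl⟩
  choose y hy using hychoice
  set Y : Matrix κ (Fin r) ℤ := Matrix.of (fun σ i => y i σ) with hY
  have hBY : B * Y = G := by
    ext τ i
    show ∑ σ, B τ σ * y i σ = (bN i : ι → ℤ) τ
    rw [← hy i]
    rfl
  -- determinants over ℤ
  have hsubG : G.submatrix s id = M'.submatrix s id * Matrix.diagonal a := by
    rw [hGM', Matrix.submatrix_mul _ _ s id id Function.bijective_id, Matrix.submatrix_id_id]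
  have hdetM's : (M'.submatrix s id).det ≠ 0 := by
    intro h0
    apply hsdet
    have : (M'.map ⇑ratC).submatrix s id = (M'.submatrix s id).map ⇑ratC := by
      ext p q
      rfl
    rw [this, ← RingHom.mapMatrix_apply, ← RingHom.map_det, h0]
    simp
  have hdetGs : (G.submatrix s id).det ≠ 0 := by
    rw [hsubG, Matrix.det_mul, Matrix.det_diagonal]
    exact mul_ne_zero hdetM's (Finset.prod_ne_zero_iff.mpr fun i _ => ha i)
  -- columns of (B.map ratC).submatrix s id span everything
  have hGsker : ((G.submatrix s id).map ⇑ratC).det ≠ 0 := by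
    rw [← RingHom.mapMatrix_apply, ← RingHom.map_det]
    intro h
    rw [eq_intCast] at h
    exact hdetGs (by exact_mod_cast h)
  have hspan : Submodule.span ℚ (Set.range fun σ : κ => ((B.map ⇑ratC).submatrix s id)ᵀ σ) = ⊤ := by
    change Submodule.span ℚ (Set.range ((B.map ⇑ratC).submatrix s id).col) = ⊤
    rw [← Matrix.range_mulVecLin]
    rw [LinearMap.range_eq_top]
    intro v
    haveI : Invertible ((G.submatrix s id).map ⇑ratC) :=
      ((G.submatrix s id).map ⇑ratC).invertibleOfIsUnitDet (isUnit_iff_ne_zero.mpr hGsker)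
    set Gs : Matrix (Fin r) (Fin r) ℚ := (G.submatrix s id).map ⇑ratC with hGs
    have hfact : (B.map ⇑ratC).submatrix s id * (Y.map ⇑ratC) = Gs := by
      rw [hGs]
      have h0 : (B.map ⇑ratC).submatrix s id = (B.submatrix s id).map ⇑ratC := rfl
      rw [h0, ← Matrix.map_mul]
      have h1 : B.submatrix s id * Y = (B * Y).submatrix s id := by
        rw [Matrix.submatrix_mul _ _ s id id Function.bijective_id]
        rfl
      rw [h1, hBY]
    refine ⟨(Y.map ⇑ratC) *ᵥ (Gs⁻¹ *ᵥ v), ?_⟩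
    rw [Matrix.mulVecLin_apply, Matrix.mulVec_mulVec, hfact, Matrix.mulVec_mulVec,
      Matrix.mul_nonsing_inv _ (isUnit_iff_ne_zero.mpr hGsker), Matrix.one_mulVec]
  obtain ⟨t, htinj, htdet⟩ := exists_det_ne_zero_of_span _ hspan
  have htdet' : ((B.submatrix s t).det) ≠ 0 := by
    intro h0
    apply htdet
    have : (Matrix.of fun p q => ((B.map ⇑ratC).submatrix s id)ᵀ (t q) p) =
        (B.submatrix s t).map ⇑ratC := by
      ext p q
      rfl
    rw [this, ← RingHom.mapMatrix_apply, ← RingHom.map_det, h0]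
    simp
  -- divisibility: (∏ i, a i) ∣ (B.submatrix s t).det
  have hcolmem : ∀ σ : κ, (fun τ => B τ σ) ∈ N := by
    intro σ
    refine ⟨Pi.single σ 1, ?_⟩
    ext τ
    rw [Matrix.toLin'_apply, Matrix.mulVec_single]
    simp
  set X : Matrix (Fin r) κ ℤ := Matrix.of (fun i σ => bN.repr ⟨fun τ => B τ σ, hcolmem σ⟩ i)
    with hX
  have hBGX : B = G * X := by
    ext τ σ
    have hrepr := bN.sum_repr ⟨fun τ => B τ σ, hcolmem σ⟩
    have h2 := congrArg (fun z : N => (z : ι → ℤ) τ) hrepr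
    simp only [AddSubmonoidClass.coe_finset_sum, SetLike.val_smul, Finset.sum_apply,
      Pi.smul_apply, smul_eq_mul] at h2
    rw [Matrix.mul_apply]
    have h3 : B τ σ = ∑ i, (bN.repr ⟨fun τ => B τ σ, hcolmem σ⟩) i * (bN i : ι → ℤ) τ :=
      h2.symm
    rw [h3]
    apply Finset.sum_congr rfl
    intro i _
    rw [mul_comm]
    rfl
  have hdvd : (∏ i, a i) ∣ (B.submatrix s t).det := by
    have hsubB : B.submatrix s t = G.submatrix s id * X.submatrix id t := by
      rw [hBGX, Matrix.submatrix_mul _ _ s id t Function.bijective_id]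
    rw [hsubB, Matrix.det_mul, hsubG, Matrix.det_mul, Matrix.det_diagonal]
    exact ⟨(M'.submatrix s id).det * (X.submatrix id t).det, by ring⟩
  -- the projection ψ and the pi-submodule P
  set ψ : (ι → ℤ) →ₗ[ℤ] (Fin r → ℤ) := LinearMap.pi (fun i => bM.coord (f i)) with hψ
  set P : Submodule ℤ (Fin r → ℤ) :=
    Submodule.pi Set.univ (fun i => Ideal.span {a i}) with hP
  have hNP : ∀ x ∈ N, ψ x ∈ P := by
    intro x hx
    rw [hP, Submodule.mem_pi]
    intro i _
    have h1 : bM.repr x (f i) = a i * bN.repr ⟨x, hx⟩ i := by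
      have h0 := Module.Basis.SmithNormalForm.repr_apply_embedding_eq_repr_smul
        (⟨bM, bN, f, a, hsnf⟩ : Module.Basis.SmithNormalForm N ι r) (m := ⟨x, hx⟩) (i := i)
      rw [LinearEquiv.map_smul] at h0
      exact h0
    rw [Ideal.mem_span_singleton]
    refine ⟨bN.repr ⟨x, hx⟩ i, ?_⟩
    show bM.repr x (f i) = _
    rw [h1, mul_comm]
  -- the key injectivity property
  have hkey : ∀ x : ι → ℤ, (∃ k : ℤ, k ≠ 0 ∧ k • x ∈ N) → ψ x ∈ P → x ∈ N := by
    intro x ⟨k, hk0, hkN⟩ hxP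
    have hoff : ∀ j, j ∉ Set.range ⇑f → bM.repr x j = 0 := by
      intro j hj
      have h1 : bM.repr (k • x) j = 0 :=
        Module.Basis.SmithNormalForm.repr_eq_zero_of_notMem_range ⟨bM, bN, f, a, hsnf⟩ ⟨k • x, hkN⟩ hj
      rw [LinearEquiv.map_smul] at h1
      have : k * bM.repr x j = 0 := h1
      rcases mul_eq_zero.mp this with h | h
      · exact absurd h hk0
      · exact h
    have hdvd' : ∀ i, a i ∣ bM.repr x (f i) := by
      intro i
      have := hxP
      rw [hP, Submodule.mem_pi] at this
      have h2 := this i (Set.mem_univ i)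
      rw [Ideal.mem_span_singleton] at h2
      exact h2
    choose tc htc using hdvd'
    set x' : N := ∑ i, tc i • bN i with hx'
    have hxx' : (x' : ι → ℤ) = x := by
      apply bM.repr.injective
      ext j
      have hcoe : (x' : ι → ℤ) = ∑ i, tc i • (bN i : ι → ℤ) := by
        rw [hx']
        simp [AddSubmonoidClass.coe_finset_sum]
      rw [hcoe]
      rw [map_sum]
      simp only [LinearEquiv.map_smul, Finsupp.coe_finset_sum, Finsupp.coe_smul,
        Finset.sum_apply, Pi.smul_apply, smul_eq_mul]
      have hterm : ∀ i, bM.repr (bN i : ι → ℤ) j = if f i = j then a i else 0 := by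
        intro i
        rw [hsnf i, LinearEquiv.map_smul]
        simp [Module.Basis.repr_self, Finsupp.single_apply, smul_eq_mul]
      by_cases hj : ∃ i₀, f i₀ = j
      · obtain ⟨i₀, hi₀⟩ := hj
        rw [Finset.sum_eq_single i₀]
        · rw [hterm i₀, if_pos hi₀, ← hi₀, htc i₀]
          ring
        · intro i _ hii₀
          rw [hterm i, if_neg, mul_zero]
          intro hfe
          exact hii₀ (f.injective (by rw [hfe, hi₀]))
        · intro h
          exact absurd (Finset.mem_univ i₀) h
      · push_neg at hj
        rw [hoff j (by simpa using hj)]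
        apply Finset.sum_eq_zero
        intro i _
        rw [hterm i, if_neg (hj i), mul_zero]
    rw [← hxx']
    exact x'.2
  -- the torsion injection and counting
  set C : Submodule ℤ ↥W := Submodule.comap W.subtype N with hC
  have hkerC : C = LinearMap.ker (N.mkQ ∘ₗ W.subtype) := by
    rw [LinearMap.ker_comp, Submodule.ker_mkQ]
  set φ : (↥W ⧸ C) →ₗ[ℤ] ((ι → ℤ) ⧸ N) :=
    Submodule.liftQ C (N.mkQ ∘ₗ W.subtype) hkerC.le with hφ
  have hφinj : Function.Injective φ := by
    rw [← LinearMap.ker_eq_bot]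
    exact Submodule.ker_liftQ_eq_bot' C _ hkerC
  have hψNP : N ≤ Submodule.comap ψ P := fun x hx => hNP x hx
  set Φ : ((ι → ℤ) ⧸ N) →ₗ[ℤ] ((Fin r → ℤ) ⧸ P) := Submodule.mapQ N P ψ hψNP with hΦ
  -- finiteness of the target
  haveI hfinQi : ∀ i : Fin r, Finite (ℤ ⧸ Ideal.span ({a i} : Set ℤ)) := by
    intro i
    haveI : NeZero (a i).natAbs := ⟨Int.natAbs_ne_zero.mpr (ha i)⟩
    exact Finite.of_equiv _ (Int.quotientSpanEquivZMod (a i)).symm.toEquiv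
  haveI hfinP : Finite ((Fin r → ℤ) ⧸ P) := by
    have e := Submodule.quotientPi (fun i : Fin r => (Ideal.span {a i} : Submodule ℤ ℤ))
    exact Finite.of_equiv _ e.symm.toEquiv
  -- the injection from the torsion submodule
  set T := Submodule.torsion ℤ (↥W ⧸ C) with hT
  have hinj : Function.Injective (fun z : T => Φ (φ z.1)) := by
    have hzero : ∀ z : ↥W ⧸ C, z ∈ T → Φ (φ z) = 0 → z = 0 := by
      intro z hzT hz0
      obtain ⟨w, rfl⟩ := Submodule.Quotient.mk_surjective C z
      obtain ⟨k, hk⟩ := hzT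
      have hkN : (k : ℤ) • (w : ι → ℤ) ∈ N := by
        rw [← Submodule.Quotient.mk_smul] at hk
        have : (k : ℤ) • w ∈ C := (Submodule.Quotient.mk_eq_zero C).mp hk
        rw [hC, Submodule.mem_comap] at this
        simpa using this
      have hφz : φ (Submodule.Quotient.mk w) = Submodule.Quotient.mk (w : ι → ℤ) := by
        rw [hφ, Submodule.liftQ_apply]
        rfl
      have hΦz : Φ (Submodule.Quotient.mk ((w : ι → ℤ))) = Submodule.Quotient.mk (ψ w) := by
        rw [hΦ, Submodule.mapQ_apply]
      rw [hφz, hΦz] at hz0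
      have hψP : ψ (w : ι → ℤ) ∈ P := (Submodule.Quotient.mk_eq_zero P).mp hz0
      have hwN : (w : ι → ℤ) ∈ N := by
        apply hkey _ ⟨(k : ℤ), ?_, hkN⟩ hψP
        exact nonZeroDivisors.coe_ne_zero k
      rw [Submodule.Quotient.mk_eq_zero]
      rw [hC, Submodule.mem_comap]
      simpa using hwN
    intro z₁ z₂ h12
    have : Φ (φ (z₁.1 - z₂.1)) = 0 := by
      rw [map_sub, map_sub]
      simp only at h12
      rw [h12, sub_self]
    have hz : z₁.1 - z₂.1 = 0 := hzero _ (sub_mem z₁.2 z₂.2) this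
    exact Subtype.ext (sub_eq_zero.mp hz)
  have hcard1 : Nat.card T ≤ Nat.card ((Fin r → ℤ) ⧸ P) :=
    Nat.card_le_card_of_injective _ hinj
  -- compute the cardinality of the quotient
  have hcard2 : Nat.card ((Fin r → ℤ) ⧸ P) = ∏ i, (a i).natAbs := by
    rw [Nat.card_congr (Submodule.quotientPi (fun i : Fin r =>
      (Ideal.span {a i} : Submodule ℤ ℤ))).toEquiv]
    rw [Nat.card_pi]
    apply Finset.prod_congr rfl
    intro i _
    rw [Nat.card_congr (Int.quotientSpanEquivZMod (a i)).toEquiv, Nat.card_zmod]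
  have hcard3 : (∏ i, (a i).natAbs) ≤ ((B.submatrix s t).det).natAbs := by
    apply Nat.le_of_dvd
    · exact Int.natAbs_pos.mpr htdet'
    · have : (∏ i, a i).natAbs = ∏ i, (a i).natAbs := by
        exact map_prod Int.natAbsHom a Finset.univ
      rw [← this]
      exact Int.natAbs_dvd_natAbs.mpr hdvd
  exact ⟨r, s, t, hsinj, htinj, htdet', le_trans (le_trans hcard1 hcard2.le) hcard3⟩

/-- **Hadamard bound on boundary submatrices and relative torsion.** Every square
submatrix of the boundary matrix `∂[K]` (from `(d+1)`-simplices to `d`-simplices,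
whose columns have `d+2` entries equal to `±1`) has determinant of absolute value
at most `(√(d+2))ⁿ` where `n = min{n_d, n_{d+1}}`; consequently the cardinality of
the torsion subgroup of any relative homology group `H_d(L, L₀; ℤ)` of `K` is at
most `(√(d+2))ⁿ`. -/
theorem hadamard_bound_boundary_and_torsion
    {V : Type} [Fintype V] [LinearOrder V] (K : SComplex V) (d : ℕ) :
    (∀ (k : ℕ) (r : Fin k → SimpIdx V d) (c : Fin k → SimpIdx V (d + 1)),
      Function.Injective r → Function.Injective c →
      (∀ i, ((r i : Finset V)) ∈ K.faces) → (∀ i, ((c i : Finset V)) ∈ K.faces) →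
      ((((gbdryZ V d).submatrix r c).det).natAbs : ℝ) ≤
        Real.sqrt ((d : ℝ) + 2) ^ (min (nface K d) (nface K (d + 1)))) ∧
    (∀ L L₀ : SComplex V, L.faces ⊆ K.faces → L₀.faces ⊆ L.faces →
      ((relTorsionCard L L₀ d : ℕ) : ℝ) ≤
        Real.sqrt ((d : ℝ) + 2) ^ (min (nface K d) (nface K (d + 1)))) := by
  constructor
  · intro k r c hr hc hrK hcK
    exact hadamard_part1 K d k r c hr hc hrK hcK
  · intro L L₀ hLK hL₀L
    classical
    set B : Matrix (SimpIdx V d) (SimpIdx V (d + 1)) ℤ := relBdryZ L L₀ d with hB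
    obtain ⟨rr, s, t, hs, ht, hdet, hcard⟩ := torsion_card_le_det B (relKer L L₀ d)
    have hrowmem : ∀ i, ((s i : Finset V)) ∈ L.faces ∧ ((s i : Finset V)) ∉ L₀.faces := by
      intro i
      by_contra hcon
      apply hdet
      apply Matrix.det_eq_zero_of_row_eq_zero i
      intro j
      rw [Matrix.submatrix_apply, hB]
      simp only [relBdryZ]
      rw [if_neg]
      tauto
    have hcolmem : ∀ j, ((t j : Finset V)) ∈ L.faces ∧ ((t j : Finset V)) ∉ L₀.faces := by
      intro j
      by_contra hcon
      apply hdet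
      apply Matrix.det_eq_zero_of_column_eq_zero j
      intro i
      rw [Matrix.submatrix_apply, hB]
      simp only [relBdryZ]
      rw [if_neg]
      tauto
    have hBg : B.submatrix s t = (gbdryZ V d).submatrix s t := by
      ext i j
      rw [Matrix.submatrix_apply, Matrix.submatrix_apply, hB]
      simp only [relBdryZ, gbdryZ]
      rw [if_pos ⟨(hrowmem i).1, (hrowmem i).2, (hcolmem j).1, (hcolmem j).2⟩]
    have hpart1 := hadamard_part1 K d rr s t hs ht
      (fun i => hLK (hrowmem i).1) (fun j => hLK (hcolmem j).1)
    have hfin : ((relTorsionCard L L₀ d : ℕ) : ℝ) ≤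
        ((((gbdryZ V d).submatrix s t).det).natAbs : ℝ) := by
      rw [← hBg]
      exact_mod_cast hcard
    exact le_trans hfin hpart1
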